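/- Let (X,d) be a compact metric space and f : X → X a homeomorphism. If (X,f) is uniquely ergodic and has the gluing orbit property, then (X,f) is minimal. -/

import Mathlib

open Filter Set Metric

namespace Paper

variable {X : Type*}

/-- Integer iteration of a homeomorphism: `f^n` for `n : ℤ`. -/
def zIter [TopologicalSpace X] (f : X ≃ₜ X) (n : ℤ) (x : X) : X :=
  if 0 ≤ n then (⇑f)^[n.toNat] x else (⇑f.symm)^[(-n).toNat] x

/-- `(X,f)` is minimal: every (two-sided) orbit is dense. -/
def Minimal [TopologicalSpace X] (f : X ≃ₜ X) : Prop :=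
  ∀ x : X, Dense (Set.range fun n : ℤ => zIter f n x)

/-- Topological transitivity. -/
def TopTransitive [TopologicalSpace X] (f : X ≃ₜ X) : Prop :=
  ∀ U V : Set X, IsOpen U → IsOpen V → U.Nonempty → V.Nonempty →
    ∃ n : ℤ, (U ∩ (zIter f n) ⁻¹' V).Nonempty

/-- Equicontinuity of the family of forward iterates. -/
def EquicontinuousSystem [MetricSpace X] (f : X → X) : Prop :=
  ∀ ε : ℝ, 0 < ε → ∃ δ : ℝ, 0 < δ ∧
    ∀ x y : X, dist x y < δ → ∀ n : ℕ, dist (f^[n] x) (f^[n] y) < ε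

/-- The transition times `s_j` (0-indexed: `s 0 = 0`,
`s (j+1) = s j + m_j + t_j - 1`) for an orbit sequence `C` (with lengths `m_j = (C j).2`)
and a gap `g`. -/
def sTimes (C : ℕ → X × ℕ) (g : ℕ → ℕ) : ℕ → ℕ
  | 0 => 0
  | j + 1 => sTimes C g j + (C j).2 + g j - 1

/-- `(C, g)` (an orbit sequence of rank `k` together with a gap) is `ε`-shadowed by `z`. -/
def Shadows [MetricSpace X] (f : X → X) (k : ℕ) (C : ℕ → X × ℕ) (g : ℕ → ℕ)
    (ε : ℝ) (z : X) : Prop :=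
  ∀ j < k, ∀ l < (C j).2, dist (f^[sTimes C g j + l] z) (f^[l] (C j).1) < ε

/-- The gluing orbit property. -/
def GluingOrbit [MetricSpace X] (f : X → X) : Prop :=
  ∀ ε : ℝ, 0 < ε → ∃ M : ℕ, 0 < M ∧
    ∀ k : ℕ, 0 < k → ∀ C : ℕ → X × ℕ, (∀ j < k, 0 < (C j).2) →
      ∃ g : ℕ → ℕ, (∀ j < k - 1, 0 < g j ∧ g j ≤ M) ∧
        ∃ z : X, Shadows f k C g ε z

/-- The specification property, at scale `ε` with constant `M`. -/
def SpecWith [MetricSpace X] (f : X → X) (ε : ℝ) (M : ℕ) : Prop :=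
  ∀ k : ℕ, 0 < k → ∀ C : ℕ → X × ℕ, (∀ j < k, 0 < (C j).2) →
    ∀ g : ℕ → ℕ, (∀ j < k - 1, M ≤ g j) →
      ∃ z : X, Shadows f k C g ε z

/-- The specification property. -/
def Specification [MetricSpace X] (f : X → X) : Prop :=
  ∀ ε : ℝ, 0 < ε → ∃ M : ℕ, 0 < M ∧ SpecWith f ε M

/-- The periodic gluing orbit property. -/
def PerGluingOrbit [MetricSpace X] (f : X → X) : Prop :=
  ∀ ε : ℝ, 0 < ε → ∃ M : ℕ, 0 < M ∧
    ∀ k : ℕ, 0 < k → ∀ C : ℕ → X × ℕ, (∀ j < k, 0 < (C j).2) →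
      ∃ t : ℕ, 0 < t ∧ t ≤ M ∧
        ∃ g : ℕ → ℕ, (∀ j < k - 1, 0 < g j ∧ g j ≤ M) ∧
          ∃ z : X, Shadows f k C g ε z ∧
            f^[sTimes C g (k - 1) + (C (k - 1)).2 + t] z = z

/-- `E` is an `(n,ε)`-separated set. -/
def IsSepSet [MetricSpace X] (f : X → X) (n : ℕ) (ε : ℝ) (E : Set X) : Prop :=
  ∀ x ∈ E, ∀ y ∈ E, x ≠ y → ∃ k < n, ε < dist (f^[k] x) (f^[k] y)

/-- `s(n,ε)`: the maximal cardinality of an `(n,ε)`-separated subset of `X`. -/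
noncomputable def sepNum [MetricSpace X] (f : X → X) (n : ℕ) (ε : ℝ) : ℕ :=
  sSup {N : ℕ | ∃ E : Finset X, IsSepSet f n ε ↑E ∧ E.card = N}

/-- Topological entropy `h(f) = lim_{ε → 0⁺} limsup_n (ln s(n,ε))/n`; since the inner
quantity is monotone as `ε` decreases, the limit equals the supremum over `ε > 0`. -/
noncomputable def topEnt [MetricSpace X] (f : X → X) : EReal :=
  ⨆ (ε : ℝ) (_ : 0 < ε),
    Filter.limsup (fun n : ℕ => ((Real.log (sepNum f n ε) / n : ℝ) : EReal)) Filter.atTop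

/-- The set of periodic points of period at most `n`. -/
def perPts (f : X → X) (n : ℕ) : Set X :=
  {x | ∃ m : ℕ, 0 < m ∧ m ≤ n ∧ f^[m] x = x}

open Classical in
/-- `p(f) = limsup_n (ln p_n(f))/n`, the exponential growth rate of periodic points
(`⊤` contributions when there are infinitely many such points). -/
noncomputable def perGrowth (f : X → X) : EReal :=
  Filter.limsup (fun n : ℕ =>
      if h : (perPts f n).Finite then ((Real.log (perPts f n).ncard / n : ℝ) : EReal) else ⊤)
    Filter.atTop

/-- The lower box dimension of `X`, `liminf_{ε→0⁺} ln s(1,ε) / (-ln ε)`. -/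
noncomputable def lowerBoxDim [MetricSpace X] (f : X → X) : EReal :=
  Filter.liminf (fun ε : ℝ => ((Real.log (sepNum f 1 ε) / (-Real.log ε) : ℝ) : EReal))
    (nhdsWithin 0 (Set.Ioi 0))



































/-! Semiflow case -/

/-- `φ` is a continuous semiflow on `X` (for nonnegative times). -/
def IsSemiflow [TopologicalSpace X] (φ : ℝ → X → X) : Prop :=
  (∀ x : X, φ 0 x = x) ∧
    (∀ s t : ℝ, 0 ≤ s → 0 ≤ t → ∀ x : X, φ (s + t) x = φ s (φ t x)) ∧
      Continuous fun p : ℝ × X => φ p.1 p.2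

/-- Minimality of a semiflow: every forward orbit is dense. -/
def MinimalFlow [TopologicalSpace X] (φ : ℝ → X → X) : Prop :=
  ∀ x : X, Dense {y : X | ∃ t : ℝ, 0 ≤ t ∧ φ t x = y}

/-- Transition times for the semiflow gluing: `s 0 = 0`, `s (j+1) = s j + m_j + t_j`. -/
def sFlow (C : ℕ → X × ℝ) (g : ℕ → ℝ) : ℕ → ℝ
  | 0 => 0
  | j + 1 => sFlow C g j + (C j).2 + g j

/-- Gluing orbit property for a semiflow. -/
def GluingFlow [MetricSpace X] (φ : ℝ → X → X) : Prop :=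
  ∀ ε : ℝ, 0 < ε → ∃ M : ℝ, 0 < M ∧
    ∀ k : ℕ, 0 < k → ∀ C : ℕ → X × ℝ, (∀ j < k, 0 ≤ (C j).2) →
      ∃ g : ℕ → ℝ, (∀ j < k - 1, 0 ≤ g j ∧ g j ≤ M) ∧
        ∃ z : X, ∀ j < k, ∀ t ∈ Set.Icc (0 : ℝ) (C j).2,
          dist (φ (sFlow C g j + t) z) (φ t (C j).1) < ε

/-- `E` is a `(T,ε)`-separated set for the semiflow `φ`. -/
def IsSepFlow [MetricSpace X] (φ : ℝ → X → X) (T ε : ℝ) (E : Set X) : Prop :=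
  ∀ x ∈ E, ∀ y ∈ E, x ≠ y → ∃ t ∈ Set.Icc (0 : ℝ) T, ε < dist (φ t x) (φ t y)

/-- `s(T,ε)` for the semiflow. -/
noncomputable def sepFlow [MetricSpace X] (φ : ℝ → X → X) (T ε : ℝ) : ℕ :=
  sSup {N : ℕ | ∃ E : Finset X, IsSepFlow φ T ε ↑E ∧ E.card = N}

/-- Topological entropy of a semiflow. -/
noncomputable def topEntFlow [MetricSpace X] (φ : ℝ → X → X) : EReal :=
  ⨆ (ε : ℝ) (_ : 0 < ε),
    Filter.limsup (fun T : ℝ => ((Real.log (sepFlow φ T ε) / T : ℝ) : EReal)) Filter.atTop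

/-! ### Auxiliary machinery for stmt10 -/

open scoped ENNReal NNReal Topology
open Filter TopologicalSpace BoundedContinuousFunction

section AuxFunct

variable [MetricSpace X]

lemma exists_bcf_bound (g : X →ᵇ ℝ≥0) : ∃ B : ℝ≥0, ∀ x, g x ≤ B := by
  rcases isEmpty_or_nonempty X with h | h
  · exact ⟨0, fun x => (h.false x).elim⟩
  · obtain ⟨x₀⟩ := h
    obtain ⟨C, hC⟩ := g.map_bounded'
    refine ⟨g x₀ + Real.toNNReal C, fun x => ?_⟩
    have h1 := hC x x₀
    have h2 : (g x : ℝ) - g x₀ ≤ C := (le_abs_self _).trans (by rwa [NNReal.dist_eq] at h1)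
    have h0 : (0:ℝ) ≤ C := le_trans dist_nonneg h1
    have hx : (g x : ℝ) ≤ g x₀ + C := by linarith
    rw [← NNReal.coe_le_coe]
    push_cast
    rwa [Real.coe_toNNReal _ h0]

/-- The empirical (Birkhoff) average of a nonnegative bounded continuous function along the
first `N k` iterates of the point `Z k`, as an extended nonnegative real. -/
noncomputable def aSeq (F : X → X) (Z : ℕ → X) (N : ℕ → ℕ) (g : X →ᵇ ℝ≥0) (k : ℕ) : ℝ≥0∞ :=
  (∑ i ∈ Finset.range (N k), (g (F^[i] (Z k)) : ℝ≥0∞)) / (N k)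

variable (F : X → X) (Z : ℕ → X) (N : ℕ → ℕ) (𝒰 : Ultrafilter ℕ)

lemma aSeq_le_bound {g : X →ᵇ ℝ≥0} {B : ℝ≥0} (hB : ∀ x, g x ≤ B) (k : ℕ) :
    aSeq F Z N g k ≤ B := by
  have hsum : (∑ i ∈ Finset.range (N k), (g (F^[i] (Z k)) : ℝ≥0∞)) ≤ (N k) * B := by
    calc (∑ i ∈ Finset.range (N k), (g (F^[i] (Z k)) : ℝ≥0∞))
        ≤ ∑ _i ∈ Finset.range (N k), (B : ℝ≥0∞) :=
          Finset.sum_le_sum fun i _ => by exact_mod_cast hB _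
      _ = (N k) * B := by simp [mul_comm]
  exact ENNReal.div_le_of_le_mul (by rwa [mul_comm] at hsum)

/-- The limit of the empirical averages along a fixed ultrafilter. -/
noncomputable def ellE (g : X →ᵇ ℝ≥0) : ℝ≥0∞ :=
  ((isCompact_univ (X := ℝ≥0∞)).ultrafilter_le_nhds ((𝒰.map (aSeq F Z N g))) (by simp)).choose

lemma ellE_spec (g : X →ᵇ ℝ≥0) :
    Tendsto (aSeq F Z N g) 𝒰 (𝓝 (ellE F Z N 𝒰 g)) := by
  rw [Filter.Tendsto, ← Ultrafilter.coe_map]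
  exact ((isCompact_univ (X := ℝ≥0∞)).ultrafilter_le_nhds ((𝒰.map (aSeq F Z N g)))
    (by simp)).choose_spec.2

lemma ellE_unique {g : X →ᵇ ℝ≥0} {c : ℝ≥0∞} (h : Tendsto (aSeq F Z N g) 𝒰 (𝓝 c)) :
    ellE F Z N 𝒰 g = c :=
  tendsto_nhds_unique (ellE_spec F Z N 𝒰 g) h

lemma ellE_le {g : X →ᵇ ℝ≥0} {c : ℝ≥0∞} (h : ∀ k, aSeq F Z N g k ≤ c) :
    ellE F Z N 𝒰 g ≤ c :=
  le_of_tendsto (ellE_spec F Z N 𝒰 g) (Filter.Eventually.of_forall h)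

lemma le_ellE {g : X →ᵇ ℝ≥0} {c : ℝ≥0∞} (h : ∀ k, c ≤ aSeq F Z N g k) :
    c ≤ ellE F Z N 𝒰 g :=
  ge_of_tendsto (ellE_spec F Z N 𝒰 g) (Filter.Eventually.of_forall h)

lemma ellE_ne_top (g : X →ᵇ ℝ≥0) : ellE F Z N 𝒰 g ≠ ∞ := by
  obtain ⟨B, hB⟩ := exists_bcf_bound g
  exact ne_top_of_le_ne_top ENNReal.coe_ne_top (ellE_le F Z N 𝒰 (aSeq_le_bound F Z N hB))

lemma ellE_add (g₁ g₂ : X →ᵇ ℝ≥0) :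
    ellE F Z N 𝒰 (g₁ + g₂) = ellE F Z N 𝒰 g₁ + ellE F Z N 𝒰 g₂ := by
  refine ellE_unique F Z N 𝒰 ?_
  have heq : aSeq F Z N (g₁ + g₂) = fun k => aSeq F Z N g₁ k + aSeq F Z N g₂ k := by
    funext k
    simp only [aSeq, BoundedContinuousFunction.coe_add, Pi.add_apply, ENNReal.coe_add]
    rw [Finset.sum_add_distrib, ENNReal.add_div]
  rw [heq]
  exact (ellE_spec F Z N 𝒰 g₁).add (ellE_spec F Z N 𝒰 g₂)

lemma ellE_smul (c : ℝ≥0) (g : X →ᵇ ℝ≥0) :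
    ellE F Z N 𝒰 (c • g) = c * ellE F Z N 𝒰 g := by
  refine ellE_unique F Z N 𝒰 ?_
  have heq : aSeq F Z N (c • g) = fun k => (c : ℝ≥0∞) * aSeq F Z N g k := by
    funext k
    simp only [aSeq, BoundedContinuousFunction.coe_smul, Pi.smul_apply, smul_eq_mul,
      ENNReal.coe_mul]
    rw [← Finset.mul_sum, mul_div_assoc]
  rw [heq]
  exact ENNReal.Tendsto.const_mul (ellE_spec F Z N 𝒰 g) (Or.inr ENNReal.coe_ne_top)

/-- The normalized ultrafilter-limit functional associated to a sequence of empirical averages. -/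
noncomputable def Lfun : (X →ᵇ ℝ≥0) →ₗ[ℝ≥0] ℝ≥0 where
  toFun g := (ellE F Z N 𝒰 g).toNNReal
  map_add' g₁ g₂ := by
    show (ellE F Z N 𝒰 (g₁ + g₂)).toNNReal
      = (ellE F Z N 𝒰 g₁).toNNReal + (ellE F Z N 𝒰 g₂).toNNReal
    rw [ellE_add, ENNReal.toNNReal_add (ellE_ne_top F Z N 𝒰 g₁) (ellE_ne_top F Z N 𝒰 g₂)]
  map_smul' c g := by
    show (ellE F Z N 𝒰 (c • g)).toNNReal = c • (ellE F Z N 𝒰 g).toNNReal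
    rw [ellE_smul, ENNReal.toNNReal_mul, ENNReal.toNNReal_coe, smul_eq_mul]

lemma aSeq_one (hN : ∀ k, 0 < N k) : aSeq F Z N (1 : X →ᵇ ℝ≥0) = fun _ => 1 := by
  funext k
  simp only [aSeq, BoundedContinuousFunction.coe_one, Pi.one_apply, ENNReal.coe_one,
    Finset.sum_const, Finset.card_range, nsmul_eq_mul, mul_one]
  exact ENNReal.div_self (by exact_mod_cast (hN k).ne') (by simp)

lemma Lfun_one (hN : ∀ k, 0 < N k) : Lfun F Z N 𝒰 (1 : X →ᵇ ℝ≥0) = 1 := by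
  have h : ellE F Z N 𝒰 1 = 1 := by
    refine ellE_unique F Z N 𝒰 ?_
    rw [aSeq_one F Z N hN]; exact tendsto_const_nhds
  show (ellE F Z N 𝒰 (1 : X →ᵇ ℝ≥0)).toNNReal = 1
  simp [h]

lemma Lfun_ge_one {g : X →ᵇ ℝ≥0} (hN : ∀ k, 0 < N k) (hg : ∀ p, 1 ≤ g p) :
    1 ≤ Lfun F Z N 𝒰 g := by
  have h1 : (1 : ℝ≥0∞) ≤ ellE F Z N 𝒰 g := by
    apply le_ellE
    intro k
    have hsum : ((N k : ℝ≥0∞)) ≤ ∑ i ∈ Finset.range (N k), (g (F^[i] (Z k)) : ℝ≥0∞) := by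
      calc ((N k : ℝ≥0∞)) = ∑ _i ∈ Finset.range (N k), 1 := by simp
        _ ≤ _ := Finset.sum_le_sum fun i _ => by exact_mod_cast hg _
    rw [aSeq, ← ENNReal.div_self (a := (N k : ℝ≥0∞)) (by exact_mod_cast (hN k).ne') (by simp)]
    exact ENNReal.div_le_div_right hsum _
  have hne := ellE_ne_top F Z N 𝒰 g
  show (1:ℝ≥0) ≤ (ellE F Z N 𝒰 g).toNNReal
  rw [← ENNReal.toNNReal_one]
  exact ENNReal.toNNReal_mono hne h1

lemma le_Lfun {g : X →ᵇ ℝ≥0} {c : ℝ≥0} (h : ∀ k, (c : ℝ≥0∞) ≤ aSeq F Z N g k) :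
    c ≤ Lfun F Z N 𝒰 g := by
  have h1 := le_ellE F Z N 𝒰 h
  have hne := ellE_ne_top F Z N 𝒰 g
  have h2 := ENNReal.toNNReal_mono hne h1
  rwa [ENNReal.toNNReal_coe] at h2

lemma Lfun_eq_zero {g : X →ᵇ ℝ≥0} (h : ∀ k, aSeq F Z N g k = 0) :
    Lfun F Z N 𝒰 g = 0 := by
  have h0 : ellE F Z N 𝒰 g = 0 := by
    refine ellE_unique F Z N 𝒰 ?_
    have : aSeq F Z N g = fun _ => 0 := funext h
    rw [this]
    exact tendsto_const_nhds
  show (ellE F Z N 𝒰 g).toNNReal = 0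
  simp [h0]

lemma tendsto_aux_div_zero (hN : Tendsto N atTop atTop) (B : ℝ≥0) :
    Tendsto (fun k => (B : ℝ≥0∞) / (N k : ℝ≥0∞)) atTop (𝓝 0) := by
  have h1 : Tendsto (fun k => ((N k : ℕ) : ℝ≥0∞)) atTop (𝓝 ∞) :=
    (ENNReal.tendsto_nat_nhds_top).comp hN
  have h2 : Tendsto (fun k => ((N k : ℕ) : ℝ≥0∞)⁻¹) atTop (𝓝 0) := by
    rw [← ENNReal.inv_top]
    exact ENNReal.tendsto_inv_iff.2 h1
  have h3 := ENNReal.Tendsto.const_mul (a := (B : ℝ≥0∞)) h2 (Or.inr ENNReal.coe_ne_top)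
  simpa [ENNReal.div_eq_inv_mul, mul_comm, mul_zero] using h3

lemma ellE_comp (h𝒰 : (𝒰 : Filter ℕ) ≤ atTop) (hN : Tendsto N atTop atTop)
    (f : X ≃ₜ X) (hF : F = ⇑f) (g : X →ᵇ ℝ≥0) :
    ellE F Z N 𝒰 (g.compContinuous (f : C(X, X))) = ellE F Z N 𝒰 g := by
  obtain ⟨B, hB⟩ := exists_bcf_bound g
  have key : ∀ k, aSeq F Z N (g.compContinuous (f : C(X, X))) k ≤ aSeq F Z N g k + B / N k
      ∧ aSeq F Z N g k ≤ aSeq F Z N (g.compContinuous (f : C(X, X))) k + B / N k := by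
    intro k
    set h : ℕ → ℝ≥0∞ := fun i => (g (F^[i] (Z k)) : ℝ≥0∞) with hh
    have hcomp : ∀ i, (((g.compContinuous (f : C(X, X))) (F^[i] (Z k)) : ℝ≥0) : ℝ≥0∞)
        = h (i+1) := by
      intro i
      simp only [BoundedContinuousFunction.compContinuous_apply, hh]
      rw [Function.iterate_succ_apply']
      simp [hF]
    have hhB : ∀ i, h i ≤ B := fun i => ENNReal.coe_le_coe.2 (hB _)
    have hsum : (∑ i ∈ Finset.range (N k), h (i+1)) + h 0
        = (∑ i ∈ Finset.range (N k), h i) + h (N k) := by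
      rw [← Finset.sum_range_succ' h (N k), Finset.sum_range_succ]
    have hA' : (∑ i ∈ Finset.range (N k), h (i+1))
        ≤ (∑ i ∈ Finset.range (N k), h i) + B := by
      calc (∑ i ∈ Finset.range (N k), h (i+1))
          ≤ (∑ i ∈ Finset.range (N k), h (i+1)) + h 0 := le_self_add
        _ = (∑ i ∈ Finset.range (N k), h i) + h (N k) := hsum
        _ ≤ _ := add_le_add_right (hhB (N k)) _
    have hA : (∑ i ∈ Finset.range (N k), h i)
        ≤ (∑ i ∈ Finset.range (N k), h (i+1)) + B := by
      calc (∑ i ∈ Finset.range (N k), h i)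
          ≤ (∑ i ∈ Finset.range (N k), h i) + h (N k) := le_self_add
        _ = (∑ i ∈ Finset.range (N k), h (i+1)) + h 0 := hsum.symm
        _ ≤ _ := add_le_add_right (hhB 0) _
    have hre : aSeq F Z N (g.compContinuous (f : C(X, X))) k
        = (∑ i ∈ Finset.range (N k), h (i+1)) / (N k) := by
      simp only [aSeq]
      congr 1
      exact Finset.sum_congr rfl fun i _ => hcomp i
    constructor
    · rw [hre, aSeq, ← ENNReal.add_div]
      exact ENNReal.div_le_div_right hA' _
    · rw [hre, aSeq, ← ENNReal.add_div]
      exact ENNReal.div_le_div_right hA _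
  have hzero : Tendsto (fun k => (B : ℝ≥0∞) / (N k : ℝ≥0∞)) 𝒰 (𝓝 0) :=
    (tendsto_aux_div_zero N hN B).mono_left h𝒰
  have ht1 : Tendsto (fun k => aSeq F Z N g k + (B:ℝ≥0∞) / N k) 𝒰 (𝓝 (ellE F Z N 𝒰 g)) := by
    simpa using (ellE_spec F Z N 𝒰 g).add hzero
  have ht2 : Tendsto (fun k => aSeq F Z N (g.compContinuous (f : C(X, X))) k
      + (B:ℝ≥0∞) / N k) 𝒰 (𝓝 (ellE F Z N 𝒰 (g.compContinuous (f : C(X, X))))) := by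
    simpa using (ellE_spec F Z N 𝒰 (g.compContinuous (f : C(X, X)))).add hzero
  refine le_antisymm ?_ ?_
  · exact le_of_tendsto_of_tendsto (ellE_spec F Z N 𝒰 _) ht1
      (Filter.Eventually.of_forall fun k => (key k).1)
  · exact le_of_tendsto_of_tendsto (ellE_spec F Z N 𝒰 _) ht2
      (Filter.Eventually.of_forall fun k => (key k).2)

lemma Lfun_comp (h𝒰 : (𝒰 : Filter ℕ) ≤ atTop) (hN : Tendsto N atTop atTop)
    (f : X ≃ₜ X) (hF : F = ⇑f) (g : X →ᵇ ℝ≥0) :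
    Lfun F Z N 𝒰 (g.compContinuous (f : C(X, X))) = Lfun F Z N 𝒰 g := by
  show (ellE F Z N 𝒰 _).toNNReal = (ellE F Z N 𝒰 g).toNNReal
  rw [ellE_comp F Z N 𝒰 h𝒰 hN f hF g]

lemma le_aSeq_of_hits {g : X →ᵇ ℝ≥0} {S : Set X} (hg : ∀ p ∈ S, 1 ≤ g p) {k : ℕ}
    {T : Finset ℕ} (hT : T ⊆ Finset.range (N k)) (hmem : ∀ i ∈ T, F^[i] (Z k) ∈ S) :
    (T.card : ℝ≥0∞) / (N k) ≤ aSeq F Z N g k := by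
  apply ENNReal.div_le_div_right
  calc (T.card : ℝ≥0∞) = ∑ _i ∈ T, 1 := by simp
    _ ≤ ∑ i ∈ T, (g (F^[i] (Z k)) : ℝ≥0∞) :=
        Finset.sum_le_sum fun i hi => by exact_mod_cast hg _ (hmem i hi)
    _ ≤ ∑ i ∈ Finset.range (N k), (g (F^[i] (Z k)) : ℝ≥0∞) :=
        Finset.sum_le_sum_of_subset hT

end AuxFunct

section AuxBump

variable [MetricSpace X]

/-- Constructor for bounded continuous `ℝ≥0`-valued functions from a uniform bound. -/
def ofNNRealBounded (h : C(X, ℝ≥0)) (B : ℝ≥0) (hb : ∀ p, h p ≤ B) : X →ᵇ ℝ≥0 :=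
  ⟨h, (B : ℝ) + B, fun x y => by
    simp only [ContinuousMap.toFun_eq_coe]
    rw [NNReal.dist_eq, abs_sub_le_iff]
    have h1 : (h x : ℝ) ≤ B := hb x
    have h2 : (h y : ℝ) ≤ B := hb y
    have h3 : (0:ℝ) ≤ h x := (h x).2
    have h4 : (0:ℝ) ≤ h y := (h y).2
    constructor <;> linarith⟩

@[simp] lemma ofNNRealBounded_apply (h : C(X, ℝ≥0)) (B : ℝ≥0) (hb : ∀ p, h p ≤ B) (p : X) :
    ofNNRealBounded h B hb p = h p := rfl

lemma exists_nnbump {K U : Set X} (hK : IsCompact K) (hU : IsOpen U) (hKU : K ⊆ U) :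
    ∃ g : X →ᵇ ℝ≥0, (∀ p ∈ K, 1 ≤ g p) ∧ (∀ p, p ∉ U → g p = 0) ∧ (∀ p, g p ≤ 1) := by
  rcases K.eq_empty_or_nonempty with he | hne
  · exact ⟨0, by simp [he], by simp, by simp⟩
  obtain ⟨δ, hδ, hsub⟩ := hK.exists_thickening_subset_open hU hKU
  have hcont : Continuous fun p : X => Real.toNNReal (1 - Metric.infDist p K / δ) :=
    continuous_real_toNNReal.comp
      (continuous_const.sub ((Metric.continuous_infDist_pt K).div_const δ))
  refine ⟨ofNNRealBounded ⟨_, hcont⟩ 1 (fun p => ?_), fun p hp => ?_, fun p hp => ?_, fun p => ?_⟩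
  · simp only [ContinuousMap.coe_mk]
    have : (1 : ℝ) - Metric.infDist p K / δ ≤ 1 := by
      have : 0 ≤ Metric.infDist p K / δ := div_nonneg Metric.infDist_nonneg hδ.le
      linarith
    calc Real.toNNReal (1 - Metric.infDist p K / δ) ≤ Real.toNNReal 1 := Real.toNNReal_mono this
      _ = 1 := Real.toNNReal_one
  · simp only [ofNNRealBounded_apply, ContinuousMap.coe_mk]
    rw [Metric.infDist_zero_of_mem hp]
    simp
  · simp only [ofNNRealBounded_apply, ContinuousMap.coe_mk]
    have hnm : p ∉ Metric.thickening δ K := fun hmem => hp (hsub hmem)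
    rw [Metric.mem_thickening_iff_infDist_lt hne] at hnm
    push_neg at hnm
    apply Real.toNNReal_of_nonpos
    have : (1:ℝ) ≤ Metric.infDist p K / δ := (one_le_div hδ).2 hnm
    linarith
  · simp only [ofNNRealBounded_apply, ContinuousMap.coe_mk]
    have : (1 : ℝ) - Metric.infDist p K / δ ≤ 1 := by
      have h0 : 0 ≤ Metric.infDist p K / δ := div_nonneg Metric.infDist_nonneg hδ.le
      linarith
    calc Real.toNNReal (1 - Metric.infDist p K / δ) ≤ Real.toNNReal 1 := Real.toNNReal_mono this
      _ = 1 := Real.toNNReal_one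

lemma exists_partition {K₁ K₂ : Set X} (h1 : IsCompact K₁) (h2 : IsCompact K₂)
    (hd : Disjoint K₁ K₂) (hn1 : K₁.Nonempty) :
    ∃ g g' : X →ᵇ ℝ≥0, (∀ p, g p + g' p = 1) ∧ (∀ p ∈ K₁, g p = 1) ∧ (∀ p ∈ K₂, g p = 0) := by
  obtain ⟨δ, hδ, hsep⟩ : ∃ δ : ℝ, 0 < δ ∧ ∀ p ∈ K₂, δ ≤ Metric.infDist p K₁ := by
    rcases K₂.eq_empty_or_nonempty with he | hn2
    · exact ⟨1, one_pos, by simp [he]⟩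
    · obtain ⟨p₀, hp₀, hmin⟩ := h2.exists_isMinOn hn2
        ((Metric.continuous_infDist_pt K₁).continuousOn)
      refine ⟨Metric.infDist p₀ K₁, ?_, fun p hp => hmin hp⟩
      have hnotmem : p₀ ∉ K₁ := fun hmem => (hd.ne_of_mem hmem hp₀ rfl)
      exact (h1.isClosed.notMem_iff_infDist_pos hn1).1 hnotmem
  set hr : X → ℝ := fun p => max 0 (1 - Metric.infDist p K₁ / δ) with hhr
  have hr0 : ∀ p, 0 ≤ hr p := fun p => le_max_left _ _
  have hr1 : ∀ p, hr p ≤ 1 := by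
    intro p
    apply max_le (by norm_num)
    have h0 : 0 ≤ Metric.infDist p K₁ / δ := div_nonneg Metric.infDist_nonneg hδ.le
    linarith
  have hcont : Continuous hr := continuous_const.max
    (continuous_const.sub ((Metric.continuous_infDist_pt K₁).div_const δ))
  have hcont' : Continuous fun p => Real.toNNReal (hr p) := continuous_real_toNNReal.comp hcont
  have hcont'' : Continuous fun p => Real.toNNReal (1 - hr p) :=
    continuous_real_toNNReal.comp (continuous_const.sub hcont)
  refine ⟨ofNNRealBounded ⟨_, hcont'⟩ 1 (fun p => by
      simpa using (Real.toNNReal_mono (hr1 p)).trans_eq Real.toNNReal_one),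
    ofNNRealBounded ⟨_, hcont''⟩ 1 (fun p => by
      simp only [ContinuousMap.coe_mk]
      have := hr0 p
      have h1 : (1:ℝ) - hr p ≤ 1 := by linarith
      simpa using (Real.toNNReal_mono h1).trans_eq Real.toNNReal_one), ?_, ?_, ?_⟩
  · intro p
    have e1 : (0:ℝ) ≤ hr p := hr0 p
    have e2 : (0:ℝ) ≤ 1 - hr p := by have := hr1 p; linarith
    apply NNReal.coe_injective
    push_cast
    simp only [ofNNRealBounded_apply, ContinuousMap.coe_mk]
    rw [Real.coe_toNNReal _ e1, Real.coe_toNNReal _ e2]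
    ring
  · intro p hp
    simp only [ofNNRealBounded_apply, ContinuousMap.coe_mk, hhr]
    rw [Metric.infDist_zero_of_mem hp]
    norm_num
  · intro p hp
    simp only [ofNNRealBounded_apply, ContinuousMap.coe_mk, hhr]
    have h1 : (1:ℝ) ≤ Metric.infDist p K₁ / δ := (one_le_div hδ).2 (hsep p hp)
    have : max 0 (1 - Metric.infDist p K₁ / δ) = 0 := max_eq_left (by linarith)
    rw [this]
    exact Real.toNNReal_zero

lemma exists_bcf_mul (f g : X →ᵇ ℝ≥0) : ∃ h : X →ᵇ ℝ≥0, ∀ p, h p = f p * g p := by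
  obtain ⟨Bf, hBf⟩ := exists_bcf_bound f
  obtain ⟨Bg, hBg⟩ := exists_bcf_bound g
  exact ⟨ofNNRealBounded ⟨fun p => f p * g p, (f.continuous.mul g.continuous)⟩ (Bf * Bg)
    (fun p => mul_le_mul' (hBf p) (hBg p)), fun p => rfl⟩

end AuxBump

section AuxContent

open MeasureTheory

variable [MetricSpace X] [CompactSpace X]
variable (Λ : (X →ᵇ ℝ≥0) →ₗ[ℝ≥0] ℝ≥0)

/-- The Riesz content on bounded continuous functions (compact space). -/
noncomputable def rieszContentAux (K : Compacts X) : ℝ≥0 :=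
  sInf (Λ '' { f : X →ᵇ ℝ≥0 | ∀ x ∈ K, (1 : ℝ≥0) ≤ f x })

theorem rieszContentAux_image_nonempty (K : Compacts X) :
    (Λ '' { f : X →ᵇ ℝ≥0 | ∀ x ∈ K, (1 : ℝ≥0) ≤ f x }).Nonempty :=
  ⟨Λ 1, 1, fun _ _ => le_rfl, rfl⟩

theorem rieszContentAux_mono {K₁ K₂ : Compacts X} (h : K₁ ≤ K₂) :
    rieszContentAux Λ K₁ ≤ rieszContentAux Λ K₂ :=
  csInf_le_csInf (OrderBot.bddBelow _) (rieszContentAux_image_nonempty Λ K₂)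
    (Set.image_mono fun f hf x hx => hf x (h hx))

theorem rieszContentAux_le {K : Compacts X} {f : X →ᵇ ℝ≥0} (h : ∀ x ∈ K, (1 : ℝ≥0) ≤ f x) :
    rieszContentAux Λ K ≤ Λ f :=
  csInf_le (OrderBot.bddBelow _) ⟨f, ⟨h, rfl⟩⟩

theorem exists_lt_rieszContentAux_add_pos (K : Compacts X) {ε : ℝ≥0} (εpos : 0 < ε) :
    ∃ f : X →ᵇ ℝ≥0, (∀ x ∈ K, (1 : ℝ≥0) ≤ f x) ∧ Λ f < rieszContentAux Λ K + ε := by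
  obtain ⟨α, ⟨⟨f, f_hyp⟩, α_hyp⟩⟩ :=
    exists_lt_of_csInf_lt (rieszContentAux_image_nonempty Λ K)
      (lt_add_of_pos_right (rieszContentAux Λ K) εpos)
  refine ⟨f, f_hyp.left, ?_⟩
  rw [f_hyp.right]
  exact α_hyp

theorem rieszContentAux_sup_le (K1 K2 : Compacts X) :
    rieszContentAux Λ (K1 ⊔ K2) ≤ rieszContentAux Λ K1 + rieszContentAux Λ K2 := by
  apply _root_.le_of_forall_pos_le_add
  intro ε εpos
  obtain ⟨f1, hf1, hl1⟩ := exists_lt_rieszContentAux_add_pos Λ K1 (half_pos εpos)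
  obtain ⟨f2, hf2, hl2⟩ := exists_lt_rieszContentAux_add_pos Λ K2 (half_pos εpos)
  have hle : rieszContentAux Λ (K1 ⊔ K2) ≤ Λ (f1 + f2) := by
    apply rieszContentAux_le
    intro x hx
    rcases hx with hx | hx
    · exact le_trans (hf1 x hx) (le_add_of_nonneg_right (zero_le))
    · exact le_trans (hf2 x hx) (le_add_of_nonneg_left (zero_le))
  rw [map_add] at hle
  calc rieszContentAux Λ (K1 ⊔ K2) ≤ Λ f1 + Λ f2 := hle
    _ ≤ (rieszContentAux Λ K1 + ε / 2) + (rieszContentAux Λ K2 + ε / 2) :=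
        add_le_add hl1.le hl2.le
    _ = rieszContentAux Λ K1 + rieszContentAux Λ K2 + ε := by
        rw [add_add_add_comm, add_halves]

lemma rieszContentAux_empty {K : Compacts X} (hK : (K : Set X) = ∅) :
    rieszContentAux Λ K = 0 := by
  refine le_antisymm ?_ (zero_le)
  have h := rieszContentAux_le Λ (K := K) (f := 0)
    (by intro p hp
        have hp' : p ∈ (K : Set X) := hp
        rw [hK] at hp'
        exact hp'.elim)
  simpa using h

lemma rieszContentAux_sup_disjoint (K₁ K₂ : Compacts X) (hd : Disjoint (K₁ : Set X) K₂) :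
    rieszContentAux Λ (K₁ ⊔ K₂) = rieszContentAux Λ K₁ + rieszContentAux Λ K₂ := by
  refine le_antisymm (rieszContentAux_sup_le Λ K₁ K₂) ?_
  rcases (K₁ : Set X).eq_empty_or_nonempty with he1 | hn1
  · rw [rieszContentAux_empty Λ he1, zero_add]
    exact rieszContentAux_mono Λ le_sup_right
  rcases (K₂ : Set X).eq_empty_or_nonempty with he2 | hn2
  · rw [rieszContentAux_empty Λ he2, add_zero]
    exact rieszContentAux_mono Λ le_sup_left
  refine _root_.le_of_forall_pos_le_add fun ε hε => ?_
  obtain ⟨fT, hfT, hΛfT⟩ := exists_lt_rieszContentAux_add_pos Λ (K₁ ⊔ K₂) hε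
  obtain ⟨g, g', hgg', hg1, hg0⟩ := exists_partition K₁.2 K₂.2 hd hn1
  obtain ⟨h₁, hh₁⟩ := exists_bcf_mul fT g
  obtain ⟨h₂, hh₂⟩ := exists_bcf_mul fT g'
  have hsum : h₁ + h₂ = fT := by
    ext p
    simp only [BoundedContinuousFunction.coe_add, Pi.add_apply, hh₁ p, hh₂ p]
    rw [← mul_add, hgg' p, mul_one]
  have hl1 : rieszContentAux Λ K₁ ≤ Λ h₁ := by
    apply rieszContentAux_le
    intro p hp
    rw [hh₁ p, hg1 p hp, mul_one]
    exact hfT p (Set.mem_union_left _ hp)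
  have hl2 : rieszContentAux Λ K₂ ≤ Λ h₂ := by
    apply rieszContentAux_le
    intro p hp
    have hgp : g' p = 1 := by
      have h := hgg' p
      rw [hg0 p hp, zero_add] at h
      exact h
    rw [hh₂ p, hgp, mul_one]
    exact hfT p (Set.mem_union_right _ hp)
  calc rieszContentAux Λ K₁ + rieszContentAux Λ K₂ ≤ Λ h₁ + Λ h₂ := add_le_add hl1 hl2
    _ = Λ (h₁ + h₂) := (map_add Λ h₁ h₂).symm
    _ = Λ fT := by rw [hsum]
    _ ≤ rieszContentAux Λ (K₁ ⊔ K₂) + ε := hΛfT.le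

/-- The content associated to a positive normalized functional. -/
noncomputable def rContent : MeasureTheory.Content X where
  toFun := rieszContentAux Λ
  mono' _ _ h := rieszContentAux_mono Λ h
  sup_disjoint' K₁ K₂ hd _ _ := rieszContentAux_sup_disjoint Λ K₁ K₂ hd
  sup_le' := rieszContentAux_sup_le Λ

variable [MeasurableSpace X] [BorelSpace X]

lemma rContent_measure_univ (h1 : ∀ g : X →ᵇ ℝ≥0, (∀ p, 1 ≤ g p) → 1 ≤ Λ g) (h2 : Λ 1 = 1) :
    (rContent Λ).measure Set.univ = 1 := by
  rw [MeasureTheory.Content.measure_apply _ MeasurableSet.univ,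
    MeasureTheory.Content.outerMeasure_of_isOpen _ _ isOpen_univ]
  have hlam : rieszContentAux Λ ⟨Set.univ, isCompact_univ⟩ = 1 := by
    refine le_antisymm ?_ ?_
    · have h := rieszContentAux_le Λ (K := ⟨Set.univ, isCompact_univ⟩) (f := 1)
        (by intro p _; simp)
      rwa [h2] at h
    · refine le_csInf (rieszContentAux_image_nonempty Λ _) ?_
      rintro b ⟨g, hg, rfl⟩
      exact h1 g fun p => hg p (Set.mem_univ p)
  have he : (rContent Λ).toFun ⟨Set.univ, isCompact_univ⟩ = 1 := hlam
  refine le_antisymm ?_ ?_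
  · have h := MeasureTheory.Content.innerContent_le (rContent Λ) ⟨Set.univ, isOpen_univ⟩
      ⟨Set.univ, isCompact_univ⟩ subset_rfl
    rw [show (rContent Λ) ⟨Set.univ, isCompact_univ⟩ = 1 from by
      show (((rContent Λ).toFun _ : ℝ≥0) : ℝ≥0∞) = 1; rw [he]; simp] at h
    exact h
  · have h := MeasureTheory.Content.le_innerContent (rContent Λ) ⟨Set.univ, isCompact_univ⟩
      ⟨Set.univ, isOpen_univ⟩ subset_rfl
    rw [show (rContent Λ) ⟨Set.univ, isCompact_univ⟩ = 1 from by
      show (((rContent Λ).toFun _ : ℝ≥0) : ℝ≥0∞) = 1; rw [he]; simp] at h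
    exact h

lemma rContent_measure_map (f : X ≃ₜ X)
    (hinv : ∀ g : X →ᵇ ℝ≥0, Λ (g.compContinuous (f : C(X, X))) = Λ g) :
    MeasureTheory.Measure.map ⇑f (rContent Λ).measure = (rContent Λ).measure := by
  have hK : ∀ ⦃K : Compacts X⦄,
      (((rContent Λ).toFun (K.map ⇑f f.continuous) : ℝ≥0) : ℝ≥0∞)
        = ((rContent Λ).toFun K : ℝ≥0∞) := by
    intro K
    have heq : rieszContentAux Λ (K.map ⇑f f.continuous) = rieszContentAux Λ K := by
      unfold rieszContentAux
      congr 1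
      ext b
      simp only [Set.mem_image, Set.mem_setOf_eq]
      constructor
      · rintro ⟨g, hg, rfl⟩
        refine ⟨g.compContinuous (f : C(X, X)), fun p hp => ?_, hinv g⟩
        have hmem : f p ∈ (K.map ⇑f f.continuous : Set X) := by
          rw [Compacts.coe_map]
          exact ⟨p, hp, rfl⟩
        simpa [BoundedContinuousFunction.compContinuous_apply] using hg (f p) hmem
      · rintro ⟨g, hg, rfl⟩
        refine ⟨g.compContinuous (f.symm : C(X, X)), fun q hq => ?_, ?_⟩
        · have hq' : q ∈ f '' (K : Set X) := by rwa [← Compacts.coe_map f.continuous K]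
          obtain ⟨p, hp, rfl⟩ := hq'
          simpa [BoundedContinuousFunction.compContinuous_apply] using hg p hp
        · rw [← hinv (g.compContinuous (f.symm : C(X, X)))]
          congr 1
          ext p
          simp [BoundedContinuousFunction.compContinuous_apply]
    exact congrArg _ heq
  refine MeasureTheory.Measure.ext fun s hs => ?_
  rw [MeasureTheory.Measure.map_apply f.continuous.measurable hs,
    MeasureTheory.Content.measure_apply _ (hs.preimage f.continuous.measurable),
    MeasureTheory.Content.measure_apply _ hs,
    MeasureTheory.Content.outerMeasure_preimage (rContent Λ) f hK s]

lemma rContent_measure_open_zero {U : Set X} (hU : IsOpen U)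
    (h0 : ∀ K : Compacts X, (K : Set X) ⊆ U → rieszContentAux Λ K = 0) :
    (rContent Λ).measure U = 0 := by
  rw [MeasureTheory.Content.measure_apply _ hU.measurableSet,
    MeasureTheory.Content.outerMeasure_of_isOpen _ _ hU]
  refine le_antisymm ?_ (zero_le)
  refine iSup₂_le fun K hK => ?_
  have h' : (rContent Λ).toFun K = 0 := h0 K hK
  simp [h']
  exact (show (((rContent Λ).toFun K : ℝ≥0) : ℝ≥0∞) = 0 by rw [h']; simp)

lemma rContent_measure_closed_ge {Fc : Set X} (hF : IsClosed Fc) (c : ℝ≥0)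
    (hc : ∀ g : X →ᵇ ℝ≥0, (∀ p ∈ Fc, 1 ≤ g p) → c ≤ Λ g) :
    (c : ℝ≥0∞) ≤ (rContent Λ).measure Fc := by
  rw [MeasureTheory.Content.measure_apply _ hF.measurableSet]
  refine le_trans ?_ (MeasureTheory.Content.le_outerMeasure_compacts _ ⟨Fc, hF.isCompact⟩)
  have h : c ≤ rieszContentAux Λ ⟨Fc, hF.isCompact⟩ := by
    refine le_csInf (rieszContentAux_image_nonempty Λ _) ?_
    rintro b ⟨g, hg, rfl⟩
    exact hc g hg
  show (c : ℝ≥0∞) ≤ (((rContent Λ).toFun ⟨Fc, hF.isCompact⟩ : ℝ≥0) : ℝ≥0∞)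
  exact_mod_cast h

end AuxContent


set_option maxHeartbeats 1000000 in
theorem stmt10 [MetricSpace X] [CompactSpace X] [MeasurableSpace X] [BorelSpace X]
    (f : X ≃ₜ X)
    (hue : ∃! μ : MeasureTheory.Measure X,
      MeasureTheory.IsProbabilityMeasure μ ∧ MeasureTheory.Measure.map (⇑f) μ = μ)
    (hgo : GluingOrbit (⇑f)) :
    Minimal f := by
  classical
  intro x
  rw [Metric.dense_iff]
  intro y ε hε
  by_contra hcon
  rw [Set.not_nonempty_iff_eq_empty] at hcon
  have horb : ∀ i : ℕ, (⇑f)^[i] x ∉ Metric.ball y ε := by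
    intro i hmem
    have hz : zIter f (i : ℤ) x = (⇑f)^[i] x := by
      simp [zIter]
    have hx2 : (⇑f)^[i] x ∈ Metric.ball y ε ∩ Set.range (fun n : ℤ => zIter f n x) :=
      ⟨hmem, ⟨(i : ℤ), hz⟩⟩
    rw [hcon] at hx2
    exact hx2
  obtain ⟨𝒰, h𝒰⟩ := Filter.exists_ultrafilter_le (Filter.atTop : Filter ℕ)
  have hNν : ∀ k : ℕ, 0 < k + 1 := fun k => k.succ_pos
  have hNν' : Filter.Tendsto (fun k : ℕ => k + 1) Filter.atTop Filter.atTop :=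
    Filter.tendsto_atTop_mono (fun k => Nat.le_succ k) Filter.tendsto_id
  obtain ⟨M, hM, hspec⟩ := hgo (ε/2) (half_pos hε)
  have hex : ∀ k : ℕ, ∃ zn : X × ℕ, k + 1 ≤ zn.2 ∧ zn.2 ≤ (k+1) * M ∧
      ∃ T : Finset ℕ, T ⊆ Finset.range zn.2 ∧ T.card = k + 1 ∧
        ∀ i ∈ T, (⇑f)^[i] zn.1 ∈ Metric.closedBall y (ε/2) := by
    intro k
    obtain ⟨g, hg, z, hz⟩ := hspec (k+1) k.succ_pos (fun _ => (y, 1)) (fun j _ => Nat.one_pos)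
    simp only [Nat.add_sub_cancel] at hg
    set s : ℕ → ℕ := sTimes (fun _ => (y,1)) g with hs
    have hs0 : s 0 = 0 := rfl
    have hstep : ∀ j, s (j+1) = s j + g j := by
      intro j
      have hd : s (j+1) = s j + 1 + g j - 1 := rfl
      omega
    have hmono : ∀ j₂, j₂ ≤ k → ∀ j₁, j₁ ≤ j₂ → s j₁ + (j₂ - j₁) ≤ s j₂ := by
      intro j₂
      induction j₂ with
      | zero =>
        intro _ j₁ h1
        have h0 : j₁ = 0 := Nat.le_zero.mp h1
        subst h0
        simp
      | succ m ih =>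
        intro hm1 j₁ h1
        rcases Nat.eq_or_lt_of_le h1 with h | hlt
        · subst h; simp
        · have h1m : j₁ ≤ m := by omega
          have hgm : 1 ≤ g m := (hg m (by omega)).1
          have hh := ih (by omega) j₁ h1m
          rw [hstep m]
          omega
    have hub : ∀ j, j ≤ k → s j ≤ j * M := by
      intro j
      induction j with
      | zero => intro _; simp [hs0]
      | succ m ih =>
        intro hm
        have hgm : g m ≤ M := (hg m (by omega)).2
        have hh := ih (by omega)
        rw [hstep m, Nat.succ_mul]
        omega
    refine ⟨(z, s k + 1), ?_, ?_, (Finset.range (k+1)).image s, ?_, ?_, ?_⟩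
    · have hh := hmono k le_rfl 0 (Nat.zero_le _)
      have h00 : s 0 = 0 := hs0
      omega
    · have hh := hub k le_rfl
      have hM1 : 1 ≤ M := hM
      calc s k + 1 ≤ k * M + 1 := by omega
        _ ≤ k * M + M := by omega
        _ = (k+1) * M := (Nat.succ_mul k M).symm
    · intro i hi
      obtain ⟨j, hj, rfl⟩ := Finset.mem_image.1 hi
      have hj' : j ≤ k := Nat.lt_succ_iff.1 (Finset.mem_range.1 hj)
      have hh := hmono k le_rfl j hj'
      simp only [Finset.mem_range]
      omega
    · rw [Finset.card_image_of_injOn, Finset.card_range]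
      intro a ha b hb hab
      simp only [Finset.coe_range, Set.mem_Iio] at ha hb
      by_contra hne
      rcases Nat.lt_or_ge a b with hab' | hab'
      · have hh := hmono b (by omega) a (by omega)
        omega
      · have hba : b < a := by omega
        have hh := hmono a (by omega) b (by omega)
        omega
    · intro i hi
      obtain ⟨j, hj, rfl⟩ := Finset.mem_image.1 hi
      have hj' : j < k + 1 := Finset.mem_range.1 hj
      have hzz := hz j hj' 0 Nat.one_pos
      simp only [add_zero, Function.iterate_zero, id_eq] at hzz
      exact Metric.mem_closedBall.2 hzz.le
  choose zn hge hle T hTsub hTcard hTmem using hex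
  have hN0ρ : ∀ k, 0 < (zn k).2 := fun k => lt_of_lt_of_le k.succ_pos (hge k)
  have hNρ' : Filter.Tendsto (fun k => (zn k).2) Filter.atTop Filter.atTop :=
    Filter.tendsto_atTop_mono (fun k => (Nat.le_succ k).trans (hge k)) Filter.tendsto_id
  set Zν : ℕ → X := fun _ => x with hZν
  set Nν : ℕ → ℕ := fun k => k + 1 with hNνdef
  set Zρ : ℕ → X := fun k => (zn k).1 with hZρ
  set Nρ : ℕ → ℕ := fun k => (zn k).2 with hNρdef
  set Λν := Lfun (⇑f) Zν Nν 𝒰 with hΛν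
  set Λρ := Lfun (⇑f) Zρ Nρ 𝒰 with hΛρ
  set ν := (rContent Λν).measure with hνdef
  set ρ := (rContent Λρ).measure with hρdef
  have hνprob : MeasureTheory.IsProbabilityMeasure ν :=
    ⟨rContent_measure_univ Λν (fun g hg => Lfun_ge_one _ _ _ _ hNν hg) (Lfun_one _ _ _ _ hNν)⟩
  have hρprob : MeasureTheory.IsProbabilityMeasure ρ :=
    ⟨rContent_measure_univ Λρ (fun g hg => Lfun_ge_one _ _ _ _ hN0ρ hg) (Lfun_one _ _ _ _ hN0ρ)⟩
  have hνmap : MeasureTheory.Measure.map ⇑f ν = ν :=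
    rContent_measure_map Λν f (fun g => Lfun_comp _ _ _ _ h𝒰 hNν' f rfl g)
  have hρmap : MeasureTheory.Measure.map ⇑f ρ = ρ :=
    rContent_measure_map Λρ f (fun g => Lfun_comp _ _ _ _ h𝒰 hNρ' f rfl g)
  have hequal : ν = ρ := hue.unique ⟨hνprob, hνmap⟩ ⟨hρprob, hρmap⟩
  have hν0 : ν (Metric.ball y ε) = 0 := by
    apply rContent_measure_open_zero Λν Metric.isOpen_ball
    intro K hK
    obtain ⟨g, hg1, hg0, _⟩ := exists_nnbump K.2 Metric.isOpen_ball hK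
    have hzero : Λν g = 0 := by
      apply Lfun_eq_zero
      intro k
      have hterm : ∀ i ∈ Finset.range (Nν k), (g ((⇑f)^[i] (Zν k)) : ℝ≥0∞) = 0 := by
        intro i _
        have : g ((⇑f)^[i] x) = 0 := hg0 _ (horb i)
        simp [hZν, this]
      simp only [aSeq]
      rw [Finset.sum_eq_zero hterm, ENNReal.zero_div]
    exact le_antisymm (le_trans (rieszContentAux_le Λν hg1) hzero.le) (zero_le)
  have hMnn : (M : ℝ≥0) ≠ 0 := Nat.cast_ne_zero.2 (by omega)
  have hρge : (((M:ℝ≥0)⁻¹ : ℝ≥0) : ℝ≥0∞) ≤ ρ (Metric.closedBall y (ε/2)) := by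
    apply rContent_measure_closed_ge Λρ Metric.isClosed_closedBall ((M:ℝ≥0)⁻¹)
    intro g hg
    apply le_Lfun
    intro k
    have hk1 : ((k:ℝ≥0∞) + 1) ≠ 0 := by simp
    have hk2 : ((k:ℝ≥0∞) + 1) ≠ ⊤ := by simp
    have hstep1 : (((M:ℝ≥0)⁻¹ : ℝ≥0) : ℝ≥0∞) = 1 / (M : ℝ≥0∞) := by
      rw [ENNReal.coe_inv hMnn, one_div]
      congr 1
      try simp
    have hstep2 : (1 : ℝ≥0∞) / (M : ℝ≥0∞)
        = ((k:ℝ≥0∞) + 1) / (((k:ℝ≥0∞) + 1) * (M : ℝ≥0∞)) := by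
      rw [← ENNReal.mul_div_mul_left (1 : ℝ≥0∞) (M : ℝ≥0∞) hk1 hk2, mul_one]
    have hstep3 : ((k:ℝ≥0∞) + 1) / (((k:ℝ≥0∞) + 1) * (M : ℝ≥0∞))
        ≤ ((k:ℝ≥0∞) + 1) / ((Nρ k : ℕ) : ℝ≥0∞) := by
      apply ENNReal.div_le_div_left
      have hh := hle k
      have : ((Nρ k : ℕ) : ℝ≥0∞) ≤ (((k+1) * M : ℕ) : ℝ≥0∞) := by exact_mod_cast hh
      calc ((Nρ k : ℕ) : ℝ≥0∞) ≤ (((k+1) * M : ℕ) : ℝ≥0∞) := this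
        _ = ((k:ℝ≥0∞) + 1) * (M : ℝ≥0∞) := by push_cast; ring
    have hstep4 : ((k:ℝ≥0∞) + 1) = (((T k).card : ℕ) : ℝ≥0∞) := by
      rw [hTcard k]; push_cast; ring
    calc (((M:ℝ≥0)⁻¹ : ℝ≥0) : ℝ≥0∞)
        = (1 : ℝ≥0∞) / (M : ℝ≥0∞) := hstep1
      _ = ((k:ℝ≥0∞) + 1) / (((k:ℝ≥0∞) + 1) * (M : ℝ≥0∞)) := hstep2
      _ ≤ ((k:ℝ≥0∞) + 1) / ((Nρ k : ℕ) : ℝ≥0∞) := hstep3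
      _ = (((T k).card : ℕ) : ℝ≥0∞) / ((Nρ k : ℕ) : ℝ≥0∞) := by rw [← hstep4]
      _ ≤ aSeq (⇑f) Zρ Nρ g k := le_aSeq_of_hits (⇑f) Zρ Nρ hg (hTsub k) (hTmem k)
  have hballs : Metric.closedBall y (ε/2) ⊆ Metric.ball y ε :=
    Metric.closedBall_subset_ball (by linarith)
  have hzero2 : ρ (Metric.closedBall y (ε/2)) = 0 := by
    rw [← hequal]
    exact le_antisymm (le_trans (MeasureTheory.measure_mono hballs) hν0.le) (zero_le)
  rw [hzero2] at hρge
  have hfin : (((M:ℝ≥0)⁻¹ : ℝ≥0) : ℝ≥0∞) = 0 := le_antisymm hρge (zero_le)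
  rw [ENNReal.coe_eq_zero, inv_eq_zero] at hfin
  exact hMnn hfin


end Paper
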